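/- Feasibility of the Bernstein discretization (Theorem 1): let f : ℝ^{n_x} × ℝ^{n_u} → ℝ^{n_x} be Lipschitz with constant L_f and h : ℝ^{n_x} × ℝ^{n_u} → ℝ^{n_h} be Lipschitz with constant L_h. Let x : [0,1] → ℝ^{n_x} be continuously differentiable and u : [0,1] → ℝ^{n_u} be continuous with x′(t) = f(x(t), u(t)) and h(x(t), u(t)) ≤ 0 componentwise for all t ∈ [0,1]. Then there exists C_P > 0, independent of N, such that for every N ∈ ℕ, N ≥ 1, the Bernstein approximations x_N = B_N x and u_N = B_N u satisfy, at every node t_j = j/N (j = 0,…,N): ‖x_N′(t_j) − f(x_N(t_j), u_N(t_j))‖ ≤ δ_P^N and every component of h(x_N(t_j), u_N(t_j)) is ≤ δ_P^N, where δ_P^N = C_P · max{W_{x′}(N^{−1/2}), W_x(N^{−1/2}), W_u(N^{−1/2})}; moreover x_N(0) = x(0) and x_N(1) = x(1). -/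

import Mathlib

open scoped BigOperators

/-- The Bernstein basis polynomial `b_{j,N}(t) = C(N,j) t^j (1-t)^(N-j)`. -/
noncomputable def bern (N j : ℕ) (t : ℝ) : ℝ :=
  (N.choose j : ℝ) * t ^ j * (1 - t) ^ (N - j)

/-- The modulus of continuity on `[0,1]` of a function `g`. -/
noncomputable def modCont {E : Type*} [NormedAddCommGroup E] (g : ℝ → E) (δ : ℝ) : ℝ :=
  sSup {d : ℝ | ∃ s t : ℝ, s ∈ Set.Icc (0:ℝ) 1 ∧ t ∈ Set.Icc (0:ℝ) 1 ∧
    |s - t| ≤ δ ∧ d = ‖g s - g t‖}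

/-- The `N`-th Bernstein approximation of `g : [0,1] → E`. -/
noncomputable def bapprox {E : Type*} [AddCommMonoid E] [Module ℝ E]
    (N : ℕ) (g : ℝ → E) (t : ℝ) : E :=
  ∑ j : Fin (N + 1), bern N (j : ℕ) t • g (((j : ℕ) : ℝ) / (N : ℝ))


open Set Finset

section ModCont
variable {E : Type*} [NormedAddCommGroup E] {g : ℝ → E} {δ : ℝ}

def mSet (g : ℝ → E) (δ : ℝ) : Set ℝ :=
  {d : ℝ | ∃ s t : ℝ, s ∈ Set.Icc (0:ℝ) 1 ∧ t ∈ Set.Icc (0:ℝ) 1 ∧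
    |s - t| ≤ δ ∧ d = ‖g s - g t‖}

lemma modCont_eq : modCont g δ = sSup (mSet g δ) := rfl

lemma mSet_bddAbove (hg : ContinuousOn g (Set.Icc 0 1)) : BddAbove (mSet g δ) := by
  obtain ⟨M, hM⟩ := isCompact_Icc.exists_bound_of_continuousOn hg
  refine ⟨2 * M, ?_⟩
  rintro d ⟨s, t, hs, ht, -, rfl⟩
  calc ‖g s - g t‖ ≤ ‖g s‖ + ‖g t‖ := norm_sub_le _ _
    _ ≤ 2 * M := by have := hM s hs; have := hM t ht; linarith

lemma zero_mem_mSet (hδ : 0 ≤ δ) : (0:ℝ) ∈ mSet g δ :=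
  ⟨0, 0, by simp, by simp, by simpa using hδ, by simp⟩

lemma modCont_nonneg (hg : ContinuousOn g (Set.Icc 0 1)) (hδ : 0 ≤ δ) :
    0 ≤ modCont g δ :=
  le_csSup (mSet_bddAbove hg) (zero_mem_mSet hδ)

lemma norm_sub_le_modCont (hg : ContinuousOn g (Set.Icc 0 1)) {s t : ℝ}
    (hs : s ∈ Set.Icc (0:ℝ) 1) (ht : t ∈ Set.Icc (0:ℝ) 1) (hst : |s - t| ≤ δ) :
    ‖g s - g t‖ ≤ modCont g δ :=
  le_csSup (mSet_bddAbove hg) ⟨s, t, hs, ht, hst, rfl⟩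

lemma norm_sub_le_mul_modCont (hg : ContinuousOn g (Set.Icc 0 1)) (hδ : 0 < δ) {s t : ℝ}
    (hs : s ∈ Set.Icc (0:ℝ) 1) (ht : t ∈ Set.Icc (0:ℝ) 1) :
    ‖g s - g t‖ ≤ (1 + |s - t| / δ) * modCont g δ := by
  have hW0 : 0 ≤ modCont g δ := modCont_nonneg hg hδ.le
  set n : ℕ := ⌈|s - t| / δ⌉₊ with hn
  have habs : 0 ≤ |s - t| / δ := by positivity
  rcases Nat.eq_zero_or_pos n with h0 | hpos
  · have h1 : |s - t| / δ ≤ 0 := Nat.ceil_eq_zero.1 h0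
    have h2 : |s - t| ≤ 0 := by
      rcases div_nonpos_iff.1 h1 with ⟨ha, hb⟩ | ⟨ha, hb⟩
      · linarith
      · exact ha
    have hst : s = t := by
      have := abs_nonpos_iff.1 h2
      linarith [sub_eq_zero.1 this]
    rw [hst]
    simp only [sub_self, norm_zero]
    positivity
  · have hnR : (0:ℝ) < n := by exact_mod_cast hpos
    set r : ℕ → ℝ := fun k => t + (k : ℝ) / n * (s - t) with hr
    have hr0 : r 0 = t := by simp [hr]
    have hrn : r n = s := by
      simp only [hr]; rw [div_self hnR.ne', one_mul]
      ring
    have hrmem : ∀ k, k ≤ n → r k ∈ Set.Icc (0:ℝ) 1 := by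
      intro k hk
      have hθ0 : 0 ≤ (k:ℝ)/n := by positivity
      have hθ1 : (k:ℝ)/n ≤ 1 := by
        rw [div_le_one hnR]; exact_mod_cast hk
      refine ⟨?_, ?_⟩ <;> simp only [hr]
      · nlinarith [mul_nonneg (sub_nonneg.2 hθ1) ht.1, mul_nonneg hθ0 hs.1]
      · nlinarith [mul_nonneg (sub_nonneg.2 hθ1) (sub_nonneg.2 ht.2),
          mul_nonneg hθ0 (sub_nonneg.2 hs.2)]
    have hstep : ∀ k, k < n → ‖g (r (k+1)) - g (r k)‖ ≤ modCont g δ := by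
      intro k hk
      refine norm_sub_le_modCont hg (hrmem _ hk) (hrmem _ hk.le) ?_
      have : r (k+1) - r k = (s - t) / n := by
        simp only [hr]; push_cast; ring
      rw [this, abs_div, abs_of_pos hnR]
      rw [div_le_iff₀ hnR]
      have hceil : |s - t| / δ ≤ (n : ℝ) := Nat.le_ceil _
      calc |s - t| ≤ (n:ℝ) * δ := by
            rw [div_le_iff₀ hδ] at hceil; linarith
        _ = δ * n := by ring
    have htel : g s - g t = ∑ k ∈ Finset.range n, (g (r (k+1)) - g (r k)) := by
      rw [Finset.sum_range_sub (fun k => g (r k)), hr0, hrn]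
    calc ‖g s - g t‖ = ‖∑ k ∈ Finset.range n, (g (r (k+1)) - g (r k))‖ := by rw [htel]
      _ ≤ ∑ k ∈ Finset.range n, ‖g (r (k+1)) - g (r k)‖ := norm_sum_le _ _
      _ ≤ ∑ _k ∈ Finset.range n, modCont g δ := by
          exact Finset.sum_le_sum fun k hk => hstep k (Finset.mem_range.1 hk)
      _ = (n : ℝ) * modCont g δ := by simp [mul_comm]
      _ ≤ (1 + |s - t| / δ) * modCont g δ := by
          refine mul_le_mul_of_nonneg_right ?_ hW0
          have := Nat.ceil_lt_add_one habs
          rw [← hn] at this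
          linarith

end ModCont

section Bern
open Polynomial

lemma bern_eq_eval (N j : ℕ) (t : ℝ) :
    bern N j t = (bernsteinPolynomial ℝ N j).eval t := by
  simp [bern, bernsteinPolynomial, mul_assoc]

lemma bern_nonneg {N j : ℕ} {t : ℝ} (ht : t ∈ Set.Icc (0:ℝ) 1) : 0 ≤ bern N j t := by
  have h1 := ht.1; have h2 := ht.2
  have : 0 ≤ 1 - t := by linarith
  unfold bern; positivity

lemma bern_sum (N : ℕ) (t : ℝ) :
    ∑ j ∈ Finset.range (N + 1), bern N j t = 1 := by
  have := congrArg (Polynomial.eval t) (bernsteinPolynomial.sum ℝ N)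
  simpa [Polynomial.eval_finset_sum, bern_eq_eval] using this

lemma bern_variance (N : ℕ) (t : ℝ) :
    ∑ j ∈ Finset.range (N + 1), ((N:ℝ) * t - j) ^ 2 * bern N j t = N * t * (1 - t) := by
  have := congrArg (Polynomial.eval t) (bernsteinPolynomial.variance ℝ N)
  simpa [Polynomial.eval_finset_sum, bern_eq_eval] using this

lemma bern_absdist_le {N : ℕ} (hN : 1 ≤ N) {t : ℝ} (ht : t ∈ Set.Icc (0:ℝ) 1) :
    ∑ j ∈ Finset.range (N + 1), bern N j t * |(j:ℝ) / N - t| ≤ 1 / (2 * Real.sqrt N) := by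
  have hN0 : (0:ℝ) < N := by exact_mod_cast hN
  have hb : ∀ j ∈ Finset.range (N+1), 0 ≤ bern N j t := fun j _ => bern_nonneg ht
  have key : (∑ j ∈ Finset.range (N + 1), bern N j t * |(j:ℝ) / N - t|)
      ≤ Real.sqrt (∑ j ∈ Finset.range (N + 1), bern N j t) *
        Real.sqrt (∑ j ∈ Finset.range (N + 1), bern N j t * ((j:ℝ)/N - t)^2) := by
    have := Real.sum_mul_le_sqrt_mul_sqrt (Finset.range (N+1))
      (fun j => Real.sqrt (bern N j t))
      (fun j => Real.sqrt (bern N j t) * |(j:ℝ)/N - t|)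
    refine le_trans (le_of_eq ?_) (this.trans (le_of_eq ?_))
    · refine Finset.sum_congr rfl fun j hj => ?_
      have hbj : Real.sqrt (bern N j t) * Real.sqrt (bern N j t) = bern N j t :=
        Real.mul_self_sqrt (hb j hj)
      conv_lhs => rw [← hbj]
      ring
    · congr 1
      · congr 1
        refine Finset.sum_congr rfl fun j hj => ?_
        rw [Real.sq_sqrt (hb j hj)]
      · congr 1
        refine Finset.sum_congr rfl fun j hj => ?_
        rw [mul_pow, Real.sq_sqrt (hb j hj), sq_abs]
  have hvar : ∑ j ∈ Finset.range (N + 1), bern N j t * ((j:ℝ)/N - t)^2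
      = t * (1 - t) / N := by
    have hv := bern_variance N t
    have : ∑ j ∈ Finset.range (N + 1), bern N j t * ((j:ℝ)/N - t)^2
        = (∑ j ∈ Finset.range (N + 1), ((N:ℝ) * t - j) ^ 2 * bern N j t) / N^2 := by
      rw [Finset.sum_div]
      refine Finset.sum_congr rfl fun j hj => ?_
      field_simp
      ring
    rw [this, hv]
    field_simp
  rw [bern_sum, Real.sqrt_one, one_mul, hvar] at key
  refine key.trans ?_
  have h4 : t * (1 - t) / N ≤ 1 / (4 * N) := by
    rw [div_le_div_iff₀ hN0 (by positivity)]
    nlinarith [mul_nonneg (sq_nonneg (2*t - 1)) hN0.le]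
  calc Real.sqrt (t * (1-t) / N) ≤ Real.sqrt (1 / (4 * N)) := Real.sqrt_le_sqrt h4
    _ = 1 / (2 * Real.sqrt N) := by
        rw [show (4:ℝ) * N = (2:ℝ)^2 * N by ring, one_div, one_div,
          Real.sqrt_inv, Real.sqrt_mul (by positivity), Real.sqrt_sq (by norm_num)]

end Bern

section Approx
variable {E : Type*} [NormedAddCommGroup E] [NormedSpace ℝ E]

lemma bapprox_eq_range (N : ℕ) (g : ℝ → E) (t : ℝ) :
    bapprox N g t = ∑ j ∈ Finset.range (N + 1), bern N j t • g ((j : ℝ) / (N : ℝ)) := by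
  rw [bapprox]
  exact Fin.sum_univ_eq_sum_range (fun j => bern N j t • g ((j : ℝ) / (N : ℝ))) (N+1)

lemma bapprox_err {g : ℝ → E} (hg : ContinuousOn g (Set.Icc 0 1)) {N : ℕ} (hN : 1 ≤ N)
    {t : ℝ} (ht : t ∈ Set.Icc (0:ℝ) 1) :
    ‖bapprox N g t - g t‖ ≤ 2 * modCont g (Real.sqrt N)⁻¹ := by
  have hN0 : (0:ℝ) < N := by exact_mod_cast hN
  have hsq : (0:ℝ) < Real.sqrt N := Real.sqrt_pos.2 hN0
  set δ : ℝ := (Real.sqrt N)⁻¹ with hδdef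
  have hδ : 0 < δ := by positivity
  have hW0 : 0 ≤ modCont g δ := modCont_nonneg hg hδ.le
  have hnode : ∀ j : ℕ, j ∈ Finset.range (N+1) → ((j:ℝ)/N) ∈ Set.Icc (0:ℝ) 1 := by
    intro j hj
    have hj' : (j:ℝ) ≤ N := by exact_mod_cast Nat.lt_succ_iff.1 (Finset.mem_range.1 hj)
    constructor
    · positivity
    · rw [div_le_one hN0]; exact hj'
  have hdiff : bapprox N g t - g t
      = ∑ j ∈ Finset.range (N + 1), bern N j t • (g ((j:ℝ)/N) - g t) := by
    rw [bapprox_eq_range]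
    rw [Finset.sum_congr rfl fun j (_ : j ∈ Finset.range (N+1)) =>
      (smul_sub (bern N j t) (g ((j:ℝ)/N)) (g t)), Finset.sum_sub_distrib,
      ← Finset.sum_smul, bern_sum, one_smul]
  rw [hdiff]
  calc ‖∑ j ∈ Finset.range (N + 1), bern N j t • (g ((j:ℝ)/N) - g t)‖
      ≤ ∑ j ∈ Finset.range (N + 1), bern N j t * ‖g ((j:ℝ)/N) - g t‖ := by
        refine (norm_sum_le _ _).trans (le_of_eq ?_)
        refine Finset.sum_congr rfl fun j hj => ?_
        rw [norm_smul, Real.norm_eq_abs, abs_of_nonneg (bern_nonneg ht)]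
    _ ≤ ∑ j ∈ Finset.range (N + 1),
          bern N j t * ((1 + |(j:ℝ)/N - t| / δ) * modCont g δ) := by
        refine Finset.sum_le_sum fun j hj => ?_
        exact mul_le_mul_of_nonneg_left
          (norm_sub_le_mul_modCont hg hδ (hnode j hj) ht) (bern_nonneg ht)
    _ = (1 + (∑ j ∈ Finset.range (N + 1), bern N j t * |(j:ℝ)/N - t|) / δ)
          * modCont g δ := by
        have expand : ∀ j ∈ Finset.range (N+1),
            bern N j t * ((1 + |(j:ℝ)/N - t| / δ) * modCont g δ)
              = bern N j t * modCont g δ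
                + bern N j t * |(j:ℝ)/N - t| * (modCont g δ / δ) := fun j _ => by ring
        rw [Finset.sum_congr rfl expand, Finset.sum_add_distrib, ← Finset.sum_mul,
          ← Finset.sum_mul, bern_sum, one_mul]
        ring
    _ ≤ 2 * modCont g δ := by
        refine mul_le_mul_of_nonneg_right ?_ hW0
        have hA := bern_absdist_le hN ht
        have h1 : (∑ j ∈ Finset.range (N + 1), bern N j t * |(j:ℝ)/N - t|) / δ
            ≤ (1 / (2 * Real.sqrt N)) / δ := by gcongr
        have hcalc : (1 / (2 * Real.sqrt N)) / δ = 1/2 := by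
          rw [hδdef]
          field_simp
        rw [hcalc] at h1
        linarith

end Approx

section Boundary
variable {E : Type*} [NormedAddCommGroup E] [NormedSpace ℝ E]

lemma bapprox_zero {N : ℕ} (hN : 1 ≤ N) (g : ℝ → E) : bapprox N g 0 = g 0 := by
  rw [bapprox_eq_range]
  rw [Finset.sum_eq_single 0]
  · simp [bern]
  · intro j hj hj0
    have : bern N j 0 = 0 := by
      simp [bern, zero_pow hj0]
    simp [this]
  · intro hmem
    exact absurd (Finset.mem_range.2 (Nat.succ_pos N)) hmem

lemma bapprox_one {N : ℕ} (hN : 1 ≤ N) (g : ℝ → E) : bapprox N g 1 = g 1 := by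
  have hN0 : (N:ℝ) ≠ 0 := by positivity
  rw [bapprox_eq_range]
  rw [Finset.sum_eq_single N]
  · have : bern N N 1 = 1 := by simp [bern]
    rw [this, one_smul, div_self hN0]
  · intro j hj hjN
    have hjlt : j < N := lt_of_le_of_ne (Nat.lt_succ_iff.1 (Finset.mem_range.1 hj)) hjN
    have : bern N j 1 = 0 := by
      have : N - j ≠ 0 := Nat.sub_ne_zero_of_lt hjlt
      simp [bern, zero_pow this]
    simp [this]
  · intro hmem
    exact absurd (Finset.mem_range.2 (Nat.lt_succ_self N)) hmem

end Boundary

section DerivFormula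
variable {E : Type*} [NormedAddCommGroup E] [NormedSpace ℝ E]

lemma bapprox_hasDerivAt (n : ℕ) (g : ℝ → E) (t : ℝ) :
    HasDerivAt (bapprox (n+1) g)
      (((n:ℝ)+1) • ∑ j ∈ Finset.range (n+1),
        bern n j t • (g (((j:ℝ)+1)/((n:ℝ)+1)) - g ((j:ℝ)/((n:ℝ)+1)))) t := by
  have hfun : bapprox (n+1) g = fun s =>
      ∑ j ∈ Finset.range (n+2), (bernsteinPolynomial ℝ (n+1) j).eval s •
        g ((j:ℝ)/((n:ℝ)+1)) := by
    funext s
    rw [bapprox_eq_range]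
    push_cast
    exact Finset.sum_congr rfl fun j _ => by rw [bern_eq_eval]
  rw [hfun]
  have hder : HasDerivAt (fun s => ∑ j ∈ Finset.range (n+2),
      (bernsteinPolynomial ℝ (n+1) j).eval s • g ((j:ℝ)/((n:ℝ)+1)))
      (∑ j ∈ Finset.range (n+2),
        ((Polynomial.derivative (bernsteinPolynomial ℝ (n+1) j)).eval t) •
          g ((j:ℝ)/((n:ℝ)+1))) t := by
    apply HasDerivAt.fun_sum
    intro j hj
    exact (Polynomial.hasDerivAt (bernsteinPolynomial ℝ (n+1) j) t).smul_const _
  convert hder using 1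
  -- now the algebraic identity
  rw [Finset.sum_range_succ' (fun j =>
    ((Polynomial.derivative (bernsteinPolynomial ℝ (n+1) j)).eval t) •
      g ((j:ℝ)/((n:ℝ)+1))) (n+1)]
  have hsucc : ∀ i, (Polynomial.derivative (bernsteinPolynomial ℝ (n+1) (i+1))).eval t
      = ((n:ℝ)+1) * ((bernsteinPolynomial ℝ n i).eval t
        - (bernsteinPolynomial ℝ n (i+1)).eval t) := by
    intro i
    rw [bernsteinPolynomial.derivative_succ]
    push_cast
    simp
  have hzero : (Polynomial.derivative (bernsteinPolynomial ℝ (n+1) 0)).eval t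
      = -(((n:ℝ)+1)) * (bernsteinPolynomial ℝ n 0).eval t := by
    rw [bernsteinPolynomial.derivative_zero]
    push_cast
    simp
  -- abbreviations
  set c : ℕ → E := fun j => g ((j:ℝ)/((n:ℝ)+1)) with hc
  set B : ℕ → ℝ := fun j => (bernsteinPolynomial ℝ n j).eval t with hB
  have hshift : ∑ i ∈ Finset.range (n+1), B (i+1) • c (i+1)
      = (∑ j ∈ Finset.range (n+1), B j • c j) - B 0 • c 0 := by
    have hBtop : B (n+1) = 0 := by
      show (bernsteinPolynomial ℝ n (n+1)).eval t = 0
      rw [bernsteinPolynomial.eq_zero_of_lt ℝ (Nat.lt_succ_self n)]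
      simp
    have h2 := Finset.sum_range_succ' (fun j => B j • c j) (n+1)
    rw [Finset.sum_range_succ (fun j => B j • c j) (n+1), hBtop, zero_smul, add_zero] at h2
    exact eq_sub_of_add_eq h2.symm
  calc (((n:ℝ)+1) • ∑ j ∈ Finset.range (n+1),
        (bern n j t) • (g (((j:ℝ)+1)/((n:ℝ)+1)) - g ((j:ℝ)/((n:ℝ)+1))))
      = ((n:ℝ)+1) • ((∑ j ∈ Finset.range (n+1), B j • c (j+1))
          - ∑ j ∈ Finset.range (n+1), B j • c j) := by
        congr 1
        rw [← Finset.sum_sub_distrib]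
        refine Finset.sum_congr rfl fun j hj => ?_
        simp only [hB, hc, bern_eq_eval, smul_sub]
        push_cast
        ring_nf
    _ = (∑ i ∈ Finset.range (n+1),
          (((n:ℝ)+1) * (B i - B (i+1))) • c (i+1)) + (-(((n:ℝ)+1)) * B 0) • c 0 := by
        rw [Finset.sum_congr rfl (fun i (_ : i ∈ Finset.range (n+1)) =>
          (by rw [mul_smul, sub_smul, smul_sub] :
            (((n:ℝ)+1) * (B i - B (i+1))) • c (i+1)
              = ((n:ℝ)+1) • (B i • c (i+1)) - ((n:ℝ)+1) • (B (i+1) • c (i+1))))]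
        rw [Finset.sum_sub_distrib, ← Finset.smul_sum, ← Finset.smul_sum, hshift]
        module
    _ = (∑ i ∈ Finset.range (n+1),
          ((Polynomial.derivative (bernsteinPolynomial ℝ (n+1) (i+1))).eval t) • c (i+1))
          + ((Polynomial.derivative (bernsteinPolynomial ℝ (n+1) 0)).eval t) • c 0 := by
        rw [hzero]
        refine congrArg (· + _) ?_
        exact Finset.sum_congr rfl fun i _ => by rw [hsucc]

end DerivFormula

section DerivErr
variable {E : Type*} [NormedAddCommGroup E] [NormedSpace ℝ E]

set_option maxHeartbeats 1600000 in
lemma deriv_bapprox_err {x x' : ℝ → E}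
    (hxd : ∀ t ∈ Set.Icc (0:ℝ) 1, HasDerivWithinAt x (x' t) (Set.Icc (0:ℝ) 1) t)
    (hx' : ContinuousOn x' (Set.Icc (0:ℝ) 1))
    (n : ℕ) {t : ℝ} (ht : t ∈ Set.Icc (0:ℝ) 1) :
    ‖deriv (bapprox (n+1) x) t - x' t‖ ≤ 4 * modCont x' (Real.sqrt ((n:ℝ)+1))⁻¹ := by
  have hn1 : (0:ℝ) < (n:ℝ)+1 := by positivity
  have hu0 : (0:ℝ) < Real.sqrt ((n:ℝ)+1) := Real.sqrt_pos.2 hn1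
  set δ : ℝ := (Real.sqrt ((n:ℝ)+1))⁻¹ with hδdef
  have hδ : 0 < δ := by positivity
  set W : ℝ := modCont x' δ with hWdef
  have hW0 : 0 ≤ W := modCont_nonneg hx' hδ.le
  have hD := (bapprox_hasDerivAt n x t).deriv
  rw [hD]
  -- nodes
  have hnode : ∀ j : ℕ, (j:ℝ) ≤ (n:ℝ)+1 → ((j:ℝ)/((n:ℝ)+1)) ∈ Set.Icc (0:ℝ) 1 := by
    intro j hj
    exact ⟨by positivity, by rw [div_le_one hn1]; exact hj⟩
  -- per-term bound
  have key : ∀ j ∈ Finset.range (n+1),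
      ‖((n:ℝ)+1) • (x (((j:ℝ)+1)/((n:ℝ)+1)) - x ((j:ℝ)/((n:ℝ)+1))) - x' t‖
        ≤ (1 + (|(j:ℝ)/((n:ℝ)+1) - t| + ((n:ℝ)+1)⁻¹)/δ) * W := by
    intro j hjmem
    have hjle : (j:ℝ) ≤ (n:ℝ) := by
      exact_mod_cast Nat.lt_succ_iff.1 (Finset.mem_range.1 hjmem)
    set a : ℝ := (j:ℝ)/((n:ℝ)+1) with hadef
    set b : ℝ := ((j:ℝ)+1)/((n:ℝ)+1) with hbdef
    have hba : b - a = ((n:ℝ)+1)⁻¹ := by rw [hadef, hbdef]; field_simp; ring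
    have hab : a ≤ b := by rw [← sub_nonneg, hba]; positivity
    have ha01 : a ∈ Set.Icc (0:ℝ) 1 := hnode j (by linarith)
    have hb01 : b ∈ Set.Icc (0:ℝ) 1 := by
      refine ⟨by positivity, ?_⟩
      rw [hbdef, div_le_one hn1]; linarith
    have hsub : Set.Icc a b ⊆ Set.Icc (0:ℝ) 1 :=
      Set.Icc_subset_Icc ha01.1 hb01.2
    set v : E := x' t with hv
    set C : ℝ := (1 + (|a - t| + ((n:ℝ)+1)⁻¹)/δ) * W with hC
    have hF : ∀ s ∈ Set.Icc a b,
        HasDerivWithinAt (fun s => x s - s • v) (x' s - v) (Set.Icc a b) s := by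
      intro s hs
      have h1 := (hxd s (hsub hs)).mono hsub
      have h2 : HasDerivWithinAt (fun s : ℝ => s • v) v (Set.Icc a b) s := by
        have := (hasDerivAt_id s).smul_const v
        simpa using this.hasDerivWithinAt
      exact h1.sub h2
    have hbound : ∀ s ∈ Set.Ico a b, ‖x' s - v‖ ≤ C := by
      intro s hs
      have hs01 : s ∈ Set.Icc (0:ℝ) 1 := hsub (Set.Ico_subset_Icc_self hs)
      have h1 : ‖x' s - x' t‖ ≤ (1 + |s - t|/δ) * W :=
        norm_sub_le_mul_modCont hx' hδ hs01 ht
      have hst : |s - t| ≤ |a - t| + ((n:ℝ)+1)⁻¹ := by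
        have h3 : |s - t| ≤ |s - a| + |a - t| := by
          have := abs_sub_le s a t
          linarith
        have h4 : |s - a| ≤ ((n:ℝ)+1)⁻¹ := by
          rw [abs_of_nonneg (by linarith [hs.1])]
          linarith [hs.2, hba]
        linarith
      refine h1.trans ?_
      rw [hC]
      gcongr
    have hmvt := norm_image_sub_le_of_norm_deriv_le_segment' hF hbound b
      (Set.right_mem_Icc.2 hab)
    have hC0 : 0 ≤ C := by
      rw [hC]; positivity
    have hFba : (x b - b • v) - (x a - a • v) = (x b - x a) - ((n:ℝ)+1)⁻¹ • v := by
      rw [← hba]; rw [sub_smul]; abel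
    rw [hFba] at hmvt
    have hkey2 : ((n:ℝ)+1) • ((x b - x a) - ((n:ℝ)+1)⁻¹ • v)
        = ((n:ℝ)+1) • (x b - x a) - v := by
      rw [smul_sub, smul_inv_smul₀ hn1.ne']
    calc ‖((n:ℝ)+1) • (x b - x a) - v‖
        = ‖((n:ℝ)+1) • ((x b - x a) - ((n:ℝ)+1)⁻¹ • v)‖ := by rw [hkey2]
      _ = (((n:ℝ)+1)) * ‖(x b - x a) - ((n:ℝ)+1)⁻¹ • v‖ := by
          rw [norm_smul, Real.norm_eq_abs, abs_of_pos hn1]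
      _ ≤ (((n:ℝ)+1)) * (C * (b - a)) := by
          exact mul_le_mul_of_nonneg_left hmvt hn1.le
      _ = C := by rw [hba]; field_simp
  -- rewrite difference as a single sum
  have hx'sum : x' t = ∑ j ∈ Finset.range (n+1), bern n j t • x' t := by
    rw [← Finset.sum_smul, bern_sum, one_smul]
  have hsplit : ((n:ℝ)+1) • (∑ j ∈ Finset.range (n+1),
        bern n j t • (x (((j:ℝ)+1)/((n:ℝ)+1)) - x ((j:ℝ)/((n:ℝ)+1)))) - x' t
      = ∑ j ∈ Finset.range (n+1), bern n j t •
          (((n:ℝ)+1) • (x (((j:ℝ)+1)/((n:ℝ)+1)) - x ((j:ℝ)/((n:ℝ)+1))) - x' t) := by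
    conv_lhs => rw [hx'sum]
    rw [Finset.smul_sum, ← Finset.sum_sub_distrib]
    refine Finset.sum_congr rfl fun j hj => ?_
    module
  rw [hsplit]
  -- sum of the bounds
  have hA := bern_absdist_le (le_refl 1) ht
  clear hA
  have hnorm : ‖∑ j ∈ Finset.range (n+1), bern n j t •
          (((n:ℝ)+1) • (x (((j:ℝ)+1)/((n:ℝ)+1)) - x ((j:ℝ)/((n:ℝ)+1))) - x' t)‖
      ≤ (1 + ((∑ j ∈ Finset.range (n+1), bern n j t * |(j:ℝ)/((n:ℝ)+1) - t|)
            + ((n:ℝ)+1)⁻¹)/δ) * W := by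
    calc ‖∑ j ∈ Finset.range (n+1), bern n j t •
          (((n:ℝ)+1) • (x (((j:ℝ)+1)/((n:ℝ)+1)) - x ((j:ℝ)/((n:ℝ)+1))) - x' t)‖
        ≤ ∑ j ∈ Finset.range (n+1), bern n j t *
            ((1 + (|(j:ℝ)/((n:ℝ)+1) - t| + ((n:ℝ)+1)⁻¹)/δ) * W) := by
          refine (norm_sum_le _ _).trans (Finset.sum_le_sum fun j hj => ?_)
          rw [norm_smul, Real.norm_eq_abs, abs_of_nonneg (bern_nonneg ht)]
          exact mul_le_mul_of_nonneg_left (key j hj) (bern_nonneg ht)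
      _ = (1 + ((∑ j ∈ Finset.range (n+1), bern n j t * |(j:ℝ)/((n:ℝ)+1) - t|)
            + ((n:ℝ)+1)⁻¹)/δ) * W := by
          have expand : ∀ j ∈ Finset.range (n+1),
              bern n j t * ((1 + (|(j:ℝ)/((n:ℝ)+1) - t| + ((n:ℝ)+1)⁻¹)/δ) * W)
                = bern n j t * ((1 + ((n:ℝ)+1)⁻¹/δ) * W)
                  + bern n j t * |(j:ℝ)/((n:ℝ)+1) - t| * (W / δ) := fun j _ => by
            ring
          rw [Finset.sum_congr rfl expand, Finset.sum_add_distrib, ← Finset.sum_mul,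
            ← Finset.sum_mul, bern_sum, one_mul]
          ring
  refine hnorm.trans ?_
  -- numeric bound on the bracket
  have hbracket : (1 + ((∑ j ∈ Finset.range (n+1), bern n j t * |(j:ℝ)/((n:ℝ)+1) - t|)
      + ((n:ℝ)+1)⁻¹)/δ) ≤ 4 := by
    have hδinv : δ⁻¹ = Real.sqrt ((n:ℝ)+1) := by rw [hδdef, inv_inv]
    rcases Nat.eq_zero_or_pos n with rfl | hn
    · -- n = 0
      have hb00 : bern 0 0 t = 1 := by simp [bern]
      have hδ1 : δ = 1 := by rw [hδdef]; norm_num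
      rw [hδ1]
      simp only [Finset.sum_range_one, hb00, one_mul, div_one, Nat.cast_zero,
        Nat.cast_ofNat, zero_add]
      have habs : |(0:ℝ)/((0:ℝ)+1) - t| ≤ 1 := by
        rw [zero_div, zero_sub, abs_neg, abs_of_nonneg ht.1]; exact ht.2
      push_cast at habs ⊢
      norm_num at habs ⊢
      linarith
    · -- n ≥ 1
      have hnR : (1:ℝ) ≤ n := by exact_mod_cast hn
      have hs0 : (0:ℝ) < Real.sqrt n := Real.sqrt_pos.2 (by linarith)
      set s : ℝ := Real.sqrt n with hsdef
      set u : ℝ := Real.sqrt ((n:ℝ)+1) with hudef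
      have hs2 : s^2 = n := Real.sq_sqrt (by linarith)
      have hu2 : u^2 = (n:ℝ)+1 := Real.sq_sqrt (by linarith)
      have hs1 : 1 ≤ s := by
        rw [hsdef]
        rw [show (1:ℝ) = Real.sqrt 1 by simp]
        exact Real.sqrt_le_sqrt (by linarith)
      have hsu : u ≤ Real.sqrt 2 * s := by
        rw [hudef, hsdef, ← Real.sqrt_mul (by norm_num)]
        exact Real.sqrt_le_sqrt (by nlinarith)
      have hsqrt2 : Real.sqrt 2 ≤ 1.5 := by
        rw [show (1.5:ℝ) = Real.sqrt (1.5^2) from (Real.sqrt_sq (by norm_num)).symm]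
        exact Real.sqrt_le_sqrt (by norm_num)
      have hsqrt2' : (4/3 : ℝ) ≤ Real.sqrt 2 := by
        rw [show (4/3:ℝ) = Real.sqrt ((4/3)^2) from (Real.sqrt_sq (by norm_num)).symm]
        exact Real.sqrt_le_sqrt (by norm_num)
      have huge : (4/3 : ℝ) ≤ u := by
        refine hsqrt2'.trans ?_
        rw [hudef, show (2:ℝ) = ((1:ℕ):ℝ)+1 by norm_num]
        exact Real.sqrt_le_sqrt (by push_cast; linarith)
      -- A ≤ 1/(2s) + 1/(n+1)
      have hAbound : ∑ j ∈ Finset.range (n+1), bern n j t * |(j:ℝ)/((n:ℝ)+1) - t|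
          ≤ 1/(2*s) + ((n:ℝ)+1)⁻¹ := by
        have h1 : ∀ j ∈ Finset.range (n+1),
            bern n j t * |(j:ℝ)/((n:ℝ)+1) - t|
              ≤ bern n j t * |(j:ℝ)/(n:ℝ) - t| + bern n j t * ((n:ℝ)+1)⁻¹ := by
          intro j hj
          have hjn : (j:ℝ) ≤ n := by
            exact_mod_cast Nat.lt_succ_iff.1 (Finset.mem_range.1 hj)
          have htri : |(j:ℝ)/((n:ℝ)+1) - t| ≤ |(j:ℝ)/(n:ℝ) - t| + ((n:ℝ)+1)⁻¹ := by
            have hdd : |(j:ℝ)/((n:ℝ)+1) - (j:ℝ)/(n:ℝ)| ≤ ((n:ℝ)+1)⁻¹ := by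
              have hval : (j:ℝ)/(n:ℝ) - (j:ℝ)/((n:ℝ)+1) = (j:ℝ)/((n:ℝ)*((n:ℝ)+1)) := by
                field_simp
                ring
              rw [abs_sub_comm, hval, abs_of_nonneg (by positivity)]
              rw [div_le_iff₀ (by positivity)]
              calc (j:ℝ) ≤ (n:ℝ) := hjn
                _ = ((n:ℝ)+1)⁻¹ * ((n:ℝ)*((n:ℝ)+1)) := by field_simp
            calc |(j:ℝ)/((n:ℝ)+1) - t|
                ≤ |(j:ℝ)/((n:ℝ)+1) - (j:ℝ)/(n:ℝ)| + |(j:ℝ)/(n:ℝ) - t| := by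
                  have := abs_sub_le ((j:ℝ)/((n:ℝ)+1)) ((j:ℝ)/(n:ℝ)) t
                  linarith
              _ ≤ |(j:ℝ)/(n:ℝ) - t| + ((n:ℝ)+1)⁻¹ := by linarith
          have hb0 := bern_nonneg (N := n) (j := j) ht
          nlinarith [mul_le_mul_of_nonneg_left htri hb0]
        calc ∑ j ∈ Finset.range (n+1), bern n j t * |(j:ℝ)/((n:ℝ)+1) - t|
            ≤ ∑ j ∈ Finset.range (n+1), (bern n j t * |(j:ℝ)/(n:ℝ) - t|
                + bern n j t * ((n:ℝ)+1)⁻¹) := Finset.sum_le_sum h1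
          _ = (∑ j ∈ Finset.range (n+1), bern n j t * |(j:ℝ)/(n:ℝ) - t|)
                + ((n:ℝ)+1)⁻¹ := by
              rw [Finset.sum_add_distrib, ← Finset.sum_mul, bern_sum, one_mul]
          _ ≤ 1/(2*s) + ((n:ℝ)+1)⁻¹ := by
              have := bern_absdist_le hn ht
              rw [hsdef]
              linarith [this]
      -- final numeric computation
      set A : ℝ := ∑ j ∈ Finset.range (n+1), bern n j t * |(j:ℝ)/((n:ℝ)+1) - t|
        with hAdef
      clear hnorm hsplit hx'sum key hD hxd hx' hnode
      clear_value A s u δ W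
      clear hAdef hδdef hWdef hW0 hsdef hudef
      have hA' : A + ((n:ℝ)+1)⁻¹ ≤ 1/(2*s) + 2*((n:ℝ)+1)⁻¹ := by linarith [hAbound]
      have hmul : (A + ((n:ℝ)+1)⁻¹)/δ ≤ (1/(2*s) + 2*((n:ℝ)+1)⁻¹) * u := by
        rw [div_eq_mul_inv, hδinv]
        exact mul_le_mul_of_nonneg_right hA' hu0.le
      have e1 : (1/(2*s)) * u ≤ 3/4 := by
        rw [div_mul_eq_mul_div, one_mul, div_le_iff₀ (by linarith : (0:ℝ) < 2*s)]
        have h15 : Real.sqrt 2 * s ≤ 1.5 * s := mul_le_mul_of_nonneg_right hsqrt2 hs0.le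
        linarith
      have e2 : (2*((n:ℝ)+1)⁻¹) * u ≤ 3/2 := by
        have hiu : ((n:ℝ)+1)⁻¹ * u = u⁻¹ := by
          rw [← hu2, sq, mul_inv, mul_assoc, inv_mul_cancel₀ hu0.ne', mul_one]
        rw [mul_assoc, hiu, ← div_eq_mul_inv, div_le_iff₀ hu0]
        linarith
      have hmul2 : (1/(2*s) + 2*((n:ℝ)+1)⁻¹) * u ≤ 9/4 := by
        rw [add_mul]
        linarith
      linarith
  calc (1 + ((∑ j ∈ Finset.range (n+1), bern n j t * |(j:ℝ)/((n:ℝ)+1) - t|)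
        + ((n:ℝ)+1)⁻¹)/δ) * W ≤ 4 * W := mul_le_mul_of_nonneg_right hbracket hW0
    _ = 4 * modCont x' (Real.sqrt ((n:ℝ)+1))⁻¹ := by rw [hWdef]

end DerivErr

lemma abs_coord_le_norm {m : ℕ} (v : EuclideanSpace ℝ (Fin m)) (i : Fin m) :
    |v i| ≤ ‖v‖ := by
  rw [EuclideanSpace.norm_eq]
  calc |v i| = Real.sqrt (‖v i‖^2) := by
        rw [Real.norm_eq_abs, sq_abs, Real.sqrt_sq_eq_abs]
    _ ≤ Real.sqrt (∑ k, ‖v k‖^2) := by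
        apply Real.sqrt_le_sqrt
        exact Finset.single_le_sum (f := fun k => ‖v k‖^2)
          (fun k _ => sq_nonneg _) (Finset.mem_univ i)


set_option maxHeartbeats 1600000 in
/-- Theorem 1, Feasibility: the Bernstein approximations of a feasible
pair `(x,u)` satisfy the relaxed dynamics and inequality constraints at all nodes,
with relaxation bound `δ_P^N = C_P · max{W_{x'}(N^{-1/2}), W_x(N^{-1/2}), W_u(N^{-1/2})}`,
and match the boundary values of `x`. -/
theorem bernstein_discretization_feasibility (nx nu nh : ℕ)
    (f : EuclideanSpace ℝ (Fin nx) × EuclideanSpace ℝ (Fin nu) → EuclideanSpace ℝ (Fin nx))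
    (h : EuclideanSpace ℝ (Fin nx) × EuclideanSpace ℝ (Fin nu) → EuclideanSpace ℝ (Fin nh))
    (Lf Lh : NNReal) (hf : LipschitzWith Lf f) (hh : LipschitzWith Lh h)
    (x x' : ℝ → EuclideanSpace ℝ (Fin nx)) (u : ℝ → EuclideanSpace ℝ (Fin nu))
    (hxd : ∀ t ∈ Set.Icc (0:ℝ) 1, HasDerivWithinAt x (x' t) (Set.Icc (0:ℝ) 1) t)
    (hx' : ContinuousOn x' (Set.Icc (0:ℝ) 1))
    (hu : ContinuousOn u (Set.Icc (0:ℝ) 1))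
    (hdyn : ∀ t ∈ Set.Icc (0:ℝ) 1, x' t = f (x t, u t))
    (hineq : ∀ t ∈ Set.Icc (0:ℝ) 1, ∀ i, h (x t, u t) i ≤ 0) :
    ∃ CP : ℝ, 0 < CP ∧ ∀ N : ℕ, 1 ≤ N → ∀ j : ℕ, j ≤ N →
      ‖deriv (bapprox N x) ((j : ℝ) / (N : ℝ))
          - f (bapprox N x ((j : ℝ) / (N : ℝ)), bapprox N u ((j : ℝ) / (N : ℝ)))‖
        ≤ CP * max (modCont x' ((N : ℝ) ^ (-(1/2 : ℝ))))
            (max (modCont x ((N : ℝ) ^ (-(1/2 : ℝ)))) (modCont u ((N : ℝ) ^ (-(1/2 : ℝ))))) ∧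
      (∀ i, h (bapprox N x ((j : ℝ) / (N : ℝ)), bapprox N u ((j : ℝ) / (N : ℝ))) i
        ≤ CP * max (modCont x' ((N : ℝ) ^ (-(1/2 : ℝ))))
            (max (modCont x ((N : ℝ) ^ (-(1/2 : ℝ)))) (modCont u ((N : ℝ) ^ (-(1/2 : ℝ)))))) ∧
      bapprox N x 0 = x 0 ∧ bapprox N x 1 = x 1 := by
  
  have hxc : ContinuousOn x (Set.Icc (0:ℝ) 1) :=
    fun t ht => (hxd t ht).continuousWithinAt
  refine ⟨4 + 2*(Lf:ℝ) + 2*(Lh:ℝ) + 1, by positivity, ?_⟩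
  intro N hN j hj
  obtain ⟨n, rfl⟩ : ∃ n, N = n + 1 := ⟨N - 1, (Nat.succ_pred_eq_of_pos hN).symm⟩
  have hn1 : (0:ℝ) < ((n+1:ℕ):ℝ) := by positivity
  have hδeq : (((n+1:ℕ):ℝ)) ^ (-(1/2 : ℝ)) = (Real.sqrt ((n:ℝ)+1))⁻¹ := by
    rw [Real.rpow_neg (le_of_lt hn1), Real.sqrt_eq_rpow]
    push_cast
    norm_num
  set δ : ℝ := (Real.sqrt ((n:ℝ)+1))⁻¹ with hδdef
  have hδ : 0 < δ := by positivity
  rw [hδeq]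
  set tj : ℝ := (j : ℝ) / ((n+1:ℕ):ℝ) with htjdef
  have htj : tj ∈ Set.Icc (0:ℝ) 1 := by
    constructor
    · positivity
    · rw [htjdef, div_le_one hn1]
      exact_mod_cast hj
  set Wx' : ℝ := modCont x' δ with hWx'
  set Wx : ℝ := modCont x δ with hWx
  set Wu : ℝ := modCont u δ with hWu
  set M : ℝ := max Wx' (max Wx Wu) with hM
  have hWx'0 : 0 ≤ Wx' := modCont_nonneg hx' hδ.le
  have hWx0 : 0 ≤ Wx := modCont_nonneg hxc hδ.le
  have hWu0 : 0 ≤ Wu := modCont_nonneg hu hδ.le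
  have hM0 : 0 ≤ M := le_trans hWx'0 (le_max_left _ _)
  have hMx' : Wx' ≤ M := le_max_left _ _
  have hMx : Wx ≤ M := le_trans (le_max_left _ _) (le_max_right _ _)
  have hMu : Wu ≤ M := le_trans (le_max_right _ _) (le_max_right _ _)
  -- approximation bounds at node
  have hax : ‖bapprox (n+1) x tj - x tj‖ ≤ 2 * Wx := by
    have := bapprox_err hxc (Nat.le_add_left 1 n) htj
    rw [hWx, hδdef]
    convert this using 3
    push_cast
    ring
  have hau : ‖bapprox (n+1) u tj - u tj‖ ≤ 2 * Wu := by
    have := bapprox_err hu (Nat.le_add_left 1 n) htj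
    rw [hWu, hδdef]
    convert this using 3
    push_cast
    ring
  -- Lipschitz estimates
  have hdistf : ‖f (bapprox (n+1) x tj, bapprox (n+1) u tj) - f (x tj, u tj)‖
      ≤ (Lf:ℝ) * (2*M) := by
    have hl := hf.dist_le_mul (bapprox (n+1) x tj, bapprox (n+1) u tj) (x tj, u tj)
    rw [Prod.dist_eq] at hl
    rw [← dist_eq_norm]
    refine hl.trans ?_
    refine mul_le_mul_of_nonneg_left (max_le ?_ ?_) (Lf.coe_nonneg)
    · rw [dist_eq_norm]; exact hax.trans (by linarith)
    · rw [dist_eq_norm]; exact hau.trans (by linarith)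
  have hdisth : ‖h (bapprox (n+1) x tj, bapprox (n+1) u tj) - h (x tj, u tj)‖
      ≤ (Lh:ℝ) * (2*M) := by
    have hl := hh.dist_le_mul (bapprox (n+1) x tj, bapprox (n+1) u tj) (x tj, u tj)
    rw [Prod.dist_eq] at hl
    rw [← dist_eq_norm]
    refine hl.trans ?_
    refine mul_le_mul_of_nonneg_left (max_le ?_ ?_) (Lh.coe_nonneg)
    · rw [dist_eq_norm]; exact hax.trans (by linarith)
    · rw [dist_eq_norm]; exact hau.trans (by linarith)
  -- derivative bound
  have hder : ‖deriv (bapprox (n+1) x) tj - x' tj‖ ≤ 4 * Wx' := by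
    have := deriv_bapprox_err hxd hx' n htj
    rw [hWx', hδdef]
    exact this
  refine ⟨?_, ?_, bapprox_zero (Nat.le_add_left 1 n) x, bapprox_one (Nat.le_add_left 1 n) x⟩
  · -- dynamics bound
    have hsplit : deriv (bapprox (n+1) x) tj
          - f (bapprox (n+1) x tj, bapprox (n+1) u tj)
        = (deriv (bapprox (n+1) x) tj - x' tj)
          - (f (bapprox (n+1) x tj, bapprox (n+1) u tj) - f (x tj, u tj)) := by
      rw [hdyn tj htj]
      abel
    calc ‖deriv (bapprox (n+1) x) tj
          - f (bapprox (n+1) x tj, bapprox (n+1) u tj)‖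
        ≤ ‖deriv (bapprox (n+1) x) tj - x' tj‖
          + ‖f (bapprox (n+1) x tj, bapprox (n+1) u tj) - f (x tj, u tj)‖ := by
          rw [hsplit]
          exact norm_sub_le _ _
      _ ≤ 4 * Wx' + (Lf:ℝ) * (2*M) := add_le_add hder hdistf
      _ ≤ (4 + 2*(Lf:ℝ) + 2*(Lh:ℝ) + 1) * M := by
          have hLf0 : (0:ℝ) ≤ Lf := Lf.coe_nonneg
          have hLh0 : (0:ℝ) ≤ Lh := Lh.coe_nonneg
          nlinarith
  · -- inequality constraints
    intro i
    have h0 := hineq tj htj i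
    have hcomp : h (bapprox (n+1) x tj, bapprox (n+1) u tj) i - h (x tj, u tj) i
        = (h (bapprox (n+1) x tj, bapprox (n+1) u tj) - h (x tj, u tj)) i := rfl
    have habs : |h (bapprox (n+1) x tj, bapprox (n+1) u tj) i - h (x tj, u tj) i|
        ≤ (Lh:ℝ) * (2*M) := by
      rw [hcomp]
      exact (abs_coord_le_norm _ i).trans hdisth
    have hLf0 : (0:ℝ) ≤ Lf := Lf.coe_nonneg
    have hLh0 : (0:ℝ) ≤ Lh := Lh.coe_nonneg
    have := abs_le.1 habs
    nlinarith [this.2]
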